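/- Let Q: J^k × C_n → F be continuous with each Q(r,·) linear, δ: J^k × W → ℝ^k continuously differentiable on I^k × W, and define Δ(r,φ) = δ(r, Q(r,φ)) on U = {(r,φ) ∈ I^k × C¹_n : Q(r,φ) ∈ W}. Then Δ is continuously differentiable on U, and for each (r,φ) ∈ U the partial derivative D₂Δ(r,φ): C¹_n → ℝ^k, ψ ↦ D₂δ(r,Q(r,φ))·Q(r,ψ), extends to a continuous linear map on C_n, and the map U × C_n → ℝ^k, (r,φ,χ) ↦ D₂δ(r,Q(r,φ))·Q(r,χ), is continuous. -/

import Mathlib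

section Aux
variable {E F G : Type*} [NormedAddCommGroup E] [NormedSpace ℝ E]
  [NormedAddCommGroup F] [NormedSpace ℝ F] [NormedAddCommGroup G] [NormedSpace ℝ G]

theorem stmt18_partial_fderiv (δ : E × F → G) {r : E} {y : F}
    (hd : DifferentiableAt ℝ δ (r, y)) :
    fderiv ℝ (fun w => δ (r, w)) y =
      (fderiv ℝ δ (r, y)).comp (ContinuousLinearMap.inr ℝ E F) := by
  have := (hd.hasFDerivAt.comp y (hasFDerivAt_prodMk_right r y))
  exact this.fderiv

end Aux

/-- for `Δ(r,φ) = δ(r,Q(r,φ))` on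
`U = {(r,φ) ∈ I^k × C¹_n : Q(r,φ) ∈ W}`, with `Q : J^k × C_n → F` continuous and linear
in the second variable whose restriction to `I^k × C¹_n` is `C¹`, and `δ` continuously
differentiable on `I^k × W`:  `Δ` is `C¹` on `U`; for each `(r,φ) ∈ U` the partial
derivative `D₂Δ(r,φ) : ψ ↦ D₂δ(r,Q(r,φ))·Q(r,ψ)` exists and extends to a continuous
linear map on `C_n`; and the map `(r,φ,χ) ↦ D₂δ(r,Q(r,φ))·Q(r,χ)` is continuous on
`U × C_n`.  (`C¹_n` is modelled as an abstract normed space `C1n` with a continuous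
linear inclusion `ι : C1n →L C_n`.) -/
theorem stmt18 (h : ℝ) (hh : 0 < h) (k n : ℕ)
    {F : Type*} [NormedAddCommGroup F] [NormedSpace ℝ F] [FiniteDimensional ℝ F]
    {C1n : Type*} [NormedAddCommGroup C1n] [NormedSpace ℝ C1n]
    (ι : C1n →L[ℝ] C(Set.Icc (-h) 0, Fin n → ℝ))
    (Ik : Set (Fin k → ℝ)) (hIk : IsOpen Ik)
    (W : Set F) (hW : IsOpen W)
    (Q : (Fin k → ℝ) × C(Set.Icc (-h) 0, Fin n → ℝ) → F)
    (hQc : Continuous Q)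
    (hQlin : ∀ r : Fin k → ℝ, IsLinearMap ℝ fun φ => Q (r, φ))
    (hQsm : ContDiffOn ℝ 1 (fun p : (Fin k → ℝ) × C1n => Q (p.1, ι p.2))
      (Ik ×ˢ Set.univ))
    (δ : (Fin k → ℝ) × F → Fin k → ℝ)
    (hδ : ContDiffOn ℝ 1 δ (Ik ×ˢ W)) :
    ContDiffOn ℝ 1 (fun p : (Fin k → ℝ) × C1n => δ (p.1, Q (p.1, ι p.2)))
      {p : (Fin k → ℝ) × C1n | p.1 ∈ Ik ∧ Q (p.1, ι p.2) ∈ W} ∧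
    (∀ p : (Fin k → ℝ) × C1n, p.1 ∈ Ik → Q (p.1, ι p.2) ∈ W →
      ∃ L : C1n →L[ℝ] (Fin k → ℝ),
        HasFDerivAt (fun ψ : C1n => δ (p.1, Q (p.1, ι ψ))) L p.2 ∧
        ∀ χ : C1n,
          L χ = fderiv ℝ (fun w => δ (p.1, w)) (Q (p.1, ι p.2)) (Q (p.1, ι χ))) ∧
    (∀ p : (Fin k → ℝ) × C1n, p.1 ∈ Ik → Q (p.1, ι p.2) ∈ W →
      ∃ Le : C(Set.Icc (-h) 0, Fin n → ℝ) →L[ℝ] (Fin k → ℝ),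
        ∀ χ : C(Set.Icc (-h) 0, Fin n → ℝ),
          Le χ = fderiv ℝ (fun w => δ (p.1, w)) (Q (p.1, ι p.2)) (Q (p.1, χ))) ∧
    ContinuousOn
      (fun x : ((Fin k → ℝ) × C1n) × C(Set.Icc (-h) 0, Fin n → ℝ) =>
        fderiv ℝ (fun w => δ (x.1.1, w)) (Q (x.1.1, ι x.1.2)) (Q (x.1.1, x.2)))
      ({p : (Fin k → ℝ) × C1n | p.1 ∈ Ik ∧ Q (p.1, ι p.2) ∈ W} ×ˢ Set.univ) := by

  -- setup
  set U : Set ((Fin k → ℝ) × C1n) :=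
    {p : (Fin k → ℝ) × C1n | p.1 ∈ Ik ∧ Q (p.1, ι p.2) ∈ W} with hU
  have hUsub : U ⊆ Ik ×ˢ (Set.univ : Set C1n) := by
    intro p hp; exact ⟨hp.1, Set.mem_univ _⟩
  have hopenIW : IsOpen (Ik ×ˢ W) := hIk.prod hW
  -- differentiability of δ at points of Ik ×ˢ W
  have hdiffδ : ∀ {r : Fin k → ℝ} {y : F}, r ∈ Ik → y ∈ W →
      DifferentiableAt ℝ δ (r, y) := by
    intro r y hr hy
    exact (hδ.differentiableOn one_ne_zero).differentiableAt
      (hopenIW.mem_nhds ⟨hr, hy⟩)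
  -- the continuous linear maps
  have hAcont : ∀ r : Fin k → ℝ, Continuous fun χ : C1n => Q (r, ι χ) :=
    fun r => hQc.comp ((continuous_const.prodMk ι.continuous))
  have hBcont : ∀ r : Fin k → ℝ,
      Continuous fun χ : C(Set.Icc (-h) 0, Fin n → ℝ) => Q (r, χ) :=
    fun r => hQc.comp (continuous_const.prodMk continuous_id)
  -- part 1
  have part1 : ContDiffOn ℝ 1 (fun p : (Fin k → ℝ) × C1n => δ (p.1, Q (p.1, ι p.2))) U := by
    have hinner : ContDiffOn ℝ 1
        (fun p : (Fin k → ℝ) × C1n => (p.1, Q (p.1, ι p.2))) U := by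
      exact ContDiffOn.prodMk (contDiff_fst.contDiffOn) (hQsm.mono hUsub)
    have : Set.MapsTo (fun p : (Fin k → ℝ) × C1n => (p.1, Q (p.1, ι p.2))) U
        (Ik ×ˢ W) := fun p hp => ⟨hp.1, hp.2⟩
    exact hδ.comp hinner this
  refine ⟨part1, ?_, ?_, ?_⟩
  · -- part 2
    intro p hp1 hp2
    set A : C1n →L[ℝ] F :=
      { toLinearMap :=
          { toFun := fun χ => Q (p.1, ι χ)
            map_add' := fun x y => by
              simp [map_add, (hQlin p.1).map_add]
            map_smul' := fun c x => by
              simp [map_smul, (hQlin p.1).map_smul] }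
        cont := hAcont p.1 } with hA
    have hg : HasFDerivAt (fun w => δ (p.1, w))
        (fderiv ℝ (fun w => δ (p.1, w)) (Q (p.1, ι p.2))) (Q (p.1, ι p.2)) := by
      have : DifferentiableAt ℝ (fun w => δ (p.1, w)) (Q (p.1, ι p.2)) :=
        (hdiffδ hp1 hp2).comp _ (differentiableAt_const _ |>.prodMk differentiableAt_id)
      exact this.hasFDerivAt
    refine ⟨(fderiv ℝ (fun w => δ (p.1, w)) (Q (p.1, ι p.2))).comp A, ?_, fun χ => rfl⟩
    exact hg.comp p.2 (A.hasFDerivAt)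
  · -- part 3
    intro p hp1 hp2
    set B : C(Set.Icc (-h) 0, Fin n → ℝ) →L[ℝ] F :=
      { toLinearMap :=
          { toFun := fun χ => Q (p.1, χ)
            map_add' := fun x y => (hQlin p.1).map_add x y
            map_smul' := fun c x => (hQlin p.1).map_smul c x }
        cont := hBcont p.1 } with hB
    exact ⟨(fderiv ℝ (fun w => δ (p.1, w)) (Q (p.1, ι p.2))).comp B, fun χ => rfl⟩
  · -- part 4
    have hfd : ContinuousOn (fderiv ℝ δ) (Ik ×ˢ W) :=
      hδ.continuousOn_fderiv_of_isOpen hopenIW le_rfl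
    have hmap : ContinuousOn
        (fun x : ((Fin k → ℝ) × C1n) × C(Set.Icc (-h) 0, Fin n → ℝ) =>
          fderiv ℝ δ (x.1.1, Q (x.1.1, ι x.1.2)))
        (U ×ˢ (Set.univ : Set (C(Set.Icc (-h) 0, Fin n → ℝ)))) := by
      apply hfd.comp
      · exact (continuous_fst.fst.prodMk
          (hQc.comp (continuous_fst.fst.prodMk
            (ι.continuous.comp continuous_fst.snd)))).continuousOn
      · intro x hx; exact ⟨hx.1.1, hx.1.2⟩
    have hvec : Continuous
        (fun x : ((Fin k → ℝ) × C1n) × C(Set.Icc (-h) 0, Fin n → ℝ) =>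
          ((0 : Fin k → ℝ), Q (x.1.1, x.2))) :=
      continuous_const.prodMk (hQc.comp (continuous_fst.fst.prodMk continuous_snd))
    have key : ContinuousOn
        (fun x : ((Fin k → ℝ) × C1n) × C(Set.Icc (-h) 0, Fin n → ℝ) =>
          fderiv ℝ δ (x.1.1, Q (x.1.1, ι x.1.2)) ((0 : Fin k → ℝ), Q (x.1.1, x.2)))
        (U ×ˢ Set.univ) :=
      (isBoundedBilinearMap_apply.continuous.comp_continuousOn
        (hmap.prodMk hvec.continuousOn))
    refine key.congr ?_
    intro x hx
    show fderiv ℝ (fun w => δ (x.1.1, w)) (Q (x.1.1, ι x.1.2)) (Q (x.1.1, x.2)) =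
      fderiv ℝ δ (x.1.1, Q (x.1.1, ι x.1.2)) ((0 : Fin k → ℝ), Q (x.1.1, x.2))
    rw [stmt18_partial_fderiv δ (hdiffδ hx.1.1 hx.1.2)]
    rfl
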